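/- arXiv:2302.02772 — 3 statements merged into one kernel-verified Lean document; each statement's English description precedes it below -/
import Mathlib

section
/- If δ(A) = δ(A⊥) = 2, then A is bimorphic with the 2-ladder, i.e., there exist Tukey morphisms in both directions between A and the 2-ladder. -/
/-- If δ(A) = δ(A⊥) = 2, then A is bimorphic with the 2-ladder. -/
theorem bimorphic_two_ladder {Am Ap : Type*} (A : Am → Ap → Prop)
    (hd2 : ∃ y₁ y₂ : Ap, ∀ x, A x y₁ ∨ A x y₂)
    (hd1 : ¬ ∃ y₀ : Ap, ∀ x, A x y₀)
    (hdd2 : ∃ x₁ x₂ : Am, ∀ y, ¬ A x₁ y ∨ ¬ A x₂ y)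
    (hdd1 : ¬ ∃ x₀ : Am, ∀ y, ¬ A x₀ y) :
    (∃ (φm : Fin 2 → Am) (φp : Ap → Fin 2),
      ∀ (b : Fin 2) (a : Ap), A (φm b) a → b = φp a) ∧
    (∃ (ψm : Am → Fin 2) (ψp : Fin 2 → Ap),
      ∀ (b : Am) (a : Fin 2), ψm b = a → A b (ψp a)) := by
  classical
  obtain ⟨y₁, y₂, hy⟩ := hd2
  obtain ⟨x₁, x₂, hx⟩ := hdd2
  constructor
  · refine ⟨![x₁, x₂], fun a => if A x₁ a then 0 else 1, ?_⟩
    intro b a h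
    fin_cases b <;> simp_all
    · rcases hx a with h' | h'
      · simp [h']
      · exact absurd h h'
  · refine ⟨fun x => if A x y₁ then 0 else 1, ![y₁, y₂], ?_⟩
    intro b a h
    subst h
    by_cases hb : A b y₁ <;> simp [hb]
    rcases hy b with h | h
    · exact absurd h hb
    · exact h
end

section
/- Suppose A' is obtained from a binary relation A by deleting a point c ∈ A₋ which is non-minimal (there exists c' ∈ A₋, c' ≠ c, with N(c') ⊊ N(c)) or has a twin (there exists c' ≠ c with N(c') = N(c)). Then A and A' are bimorphic. -/
/-- Deleting a non-minimal point of A₋, or a point with a twin, yields a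
relation bimorphic to A. -/
theorem bimorphic_delete_point {Am Ap : Type*} (A : Am → Ap → Prop) (c : Am)
    (h : ∃ c' : Am, c' ≠ c ∧
      ({b | A c' b} ⊂ {b | A c b} ∨ {b | A c' b} = {b | A c b})) :
    (∃ (φm : {x : Am // x ≠ c} → Am) (φp : Ap → Ap),
      ∀ (b : {x : Am // x ≠ c}) (a : Ap), A (φm b) a → A (b : Am) (φp a)) ∧
    (∃ (ψm : Am → {x : Am // x ≠ c}) (ψp : Ap → Ap),
      ∀ (b : Am) (a : Ap), A ((ψm b : {x : Am // x ≠ c}) : Am) a → A b (ψp a)) := by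
  obtain ⟨c', hne, hsub⟩ := h
  have hsub : {b | A c' b} ⊆ {b | A c b} := by
    rcases hsub with h | h
    · exact h.subset
    · exact h.le
  constructor
  · exact ⟨fun b => b, id, fun b a hb => hb⟩
  · classical
    refine ⟨fun b => if hb : b = c then ⟨c', hne⟩ else ⟨b, hb⟩, id, fun b a hb => ?_⟩
    by_cases hbc : b = c
    · subst hbc
      simp only [dif_pos rfl] at hb
      exact hsub hb
    · simpa [dif_neg hbc] using hb
end

section
/- For each n ≥ 2 there exists a finite binary relation C_n with |C_{n-}| = |C_{n+}| = n! such that δ(C_n) = δ(C_n⊥) = n. -/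
/-- `Y` dominates the relation `A`. -/
def Dominates {α : Type*} (A : α → α → Prop) (Y : Finset α) : Prop :=
  ∀ x, ∃ y ∈ Y, A x y

/-- The dominating number of `A` is exactly `n`. -/
def Dom {α : Type*} (A : α → α → Prop) (n : ℕ) : Prop :=
  (∃ Y, Dominates A Y ∧ Y.card = n) ∧ ∀ Y, Dominates A Y → n ≤ Y.card

open Fin.NatCast in
lemma exists_transition {m : ℕ} (S : Finset (Fin (m+1))) (hne : S.Nonempty)
    (hnu : S ≠ Finset.univ) : ∃ i, i ∉ S ∧ i + 1 ∈ S := by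
  classical
  obtain ⟨j₀, hj₀⟩ := hne
  obtain ⟨i₁, hi₁⟩ : ∃ i, i ∉ S := by
    by_contra h
    push_neg at h
    exact hnu (Finset.eq_univ_iff_forall.2 h)
  have hex : ∃ k : ℕ, i₁ + (k : Fin (m+1)) ∈ S :=
    ⟨(j₀ - i₁).val, by rw [Fin.cast_val_eq_self]; simpa using hj₀⟩
  set k₀ := Nat.find hex with hk₀def
  have hk₀ : i₁ + (k₀ : Fin (m+1)) ∈ S := Nat.find_spec hex
  have hk₀ne : k₀ ≠ 0 := by
    intro h
    rw [h] at hk₀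
    simp only [Nat.cast_zero, add_zero] at hk₀
    exact hi₁ hk₀
  obtain ⟨k₁, hk₁⟩ : ∃ k₁, k₀ = k₁ + 1 := ⟨k₀ - 1, by omega⟩
  refine ⟨i₁ + ((k₁ : ℕ) : Fin (m+1)), ?_, ?_⟩
  · exact Nat.find_min hex (by omega)
  · have h2 : ((k₁ : ℕ) : Fin (m+1)) + 1 = ((k₀ : ℕ) : Fin (m+1)) := by
      rw [hk₁]; push_cast; ring
    rw [add_assoc, h2]; exact hk₀

lemma dom_block {α : Type*} {n : ℕ} (hn : 1 ≤ n) (A : α → α → Prop)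
    (f g : Fin (n+1) → Fin (n+1))
    (htrans : ∀ S : Finset (Fin (n+1)), S.Nonempty → S ≠ Finset.univ →
      ∃ i, f i ∉ S ∧ g i ∈ S)
    (hA : Dom A n) :
    Dom (fun p q : Fin (n+1) × α =>
      if q.1 = f p.1 then True else if q.1 = g p.1 then False else A p.2 q.2)
      (n+1) := by
  classical
  obtain ⟨⟨Y₀, hY₀dom, hY₀card⟩, hAlow⟩ := hA
  obtain ⟨y₀, hy₀⟩ : Y₀.Nonempty := Finset.card_pos.mp (by omega)
  constructor
  · refine ⟨Finset.univ.image (fun j : Fin (n+1) => (j, y₀)), ?_, ?_⟩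
    · intro p
      refine ⟨(f p.1, y₀), Finset.mem_image_of_mem _ (Finset.mem_univ _), ?_⟩
      simp
    · rw [Finset.card_image_of_injective _
        (fun a b h => by simpa using congrArg Prod.fst h)]
      simp
  · intro Y hY
    by_contra hcard
    push_neg at hcard
    have hYcard : Y.card ≤ n := by omega
    set S := Y.image Prod.fst with hS
    have hSne : S.Nonempty := by
      obtain ⟨y, hy, -⟩ := hY (0, y₀)
      exact ⟨y.1, Finset.mem_image_of_mem _ hy⟩
    have hSnu : S ≠ Finset.univ := by
      intro h
      have h1 : S.card = n + 1 := by rw [h]; simp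
      have h2 := Finset.card_image_le (s := Y) (f := Prod.fst)
      rw [← hS] at h2
      omega
    obtain ⟨i, hfi, hgi⟩ := htrans S hSne hSnu
    set V := (Y.filter (fun p => p.1 ≠ g i)).image Prod.snd with hV
    have hVdom : Dominates A V := by
      intro u
      obtain ⟨⟨j, v⟩, hjv, hrel⟩ := hY (i, u)
      dsimp only at hrel
      by_cases h1 : j = f i
      · exact absurd (h1 ▸ Finset.mem_image_of_mem Prod.fst hjv) hfi
      · rw [if_neg h1] at hrel
        by_cases h2 : j = g i
        · rw [if_pos h2] at hrel; exact hrel.elim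
        · rw [if_neg h2] at hrel
          exact ⟨v, Finset.mem_image_of_mem _ (Finset.mem_filter.2 ⟨hjv, h2⟩), hrel⟩
    have hVlow := hAlow V hVdom
    have h1 : V.card ≤ (Y.filter (fun p => p.1 ≠ g i)).card := Finset.card_image_le
    have h2 : 1 ≤ (Y.filter (fun p => p.1 = g i)).card := by
      obtain ⟨p, hp, hp2⟩ := Finset.mem_image.mp hgi
      exact Finset.card_pos.mpr ⟨p, Finset.mem_filter.2 ⟨hp, hp2⟩⟩
    have h3 : (Y.filter (fun p => p.1 = g i)).card
        + (Y.filter (fun p => p.1 ≠ g i)).card = Y.card := by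
      rw [Finset.card_filter_add_card_filter_not]
    omega

lemma dom_equiv {α β : Type*} (e : α ≃ β) {A : α → α → Prop} {n : ℕ}
    (h : Dom A n) : Dom (fun x y => A (e.symm x) (e.symm y)) n := by
  classical
  obtain ⟨⟨Y, hYdom, hYcard⟩, hlow⟩ := h
  constructor
  · refine ⟨Y.image e, ?_, ?_⟩
    · intro x
      obtain ⟨y, hy, hA⟩ := hYdom (e.symm x)
      exact ⟨e y, Finset.mem_image_of_mem _ hy, by simpa using hA⟩
    · rw [Finset.card_image_of_injective _ e.injective, hYcard]
  · intro Y' hY'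
    have hd : Dominates A (Y'.image e.symm) := by
      intro x
      obtain ⟨y, hy, hA⟩ := hY' (e x)
      exact ⟨e.symm y, Finset.mem_image_of_mem _ hy, by simpa using hA⟩
    have := hlow _ hd
    rwa [Finset.card_image_of_injective _ e.symm.injective] at this

lemma key : ∀ n, 2 ≤ n → ∃ C : Fin n.factorial → Fin n.factorial → Prop,
    Dom C n ∧ Dom (fun y x => ¬ C x y) n := by
  intro n hn
  induction n, hn using Nat.le_induction with
  | base =>
    exact ⟨fun x y => x = y, by unfold Dom Dominates; decide,
      by unfold Dom Dominates; decide⟩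
  | succ n hn ih =>
    obtain ⟨C, hC, hC'⟩ := ih
    have h10 : (1 : Fin (n+1)) ≠ 0 := by
      intro h
      have := Fin.one_eq_zero_iff.mp h
      omega
    set B : Fin (n+1) × Fin n.factorial → Fin (n+1) × Fin n.factorial → Prop :=
      fun p q => if q.1 = p.1 then True else if q.1 = p.1 + 1 then False
        else C p.2 q.2 with hBdef
    have hB : Dom B (n+1) := by
      refine dom_block (by omega) C (fun i => i) (fun i => i + 1) ?_ hC
      intro S h1 h2
      exact exists_transition S h1 h2
    have hB' : Dom (fun x y => ¬ B y x) (n+1) := by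
      have hblk := dom_block (by omega) (fun v u => ¬ C u v)
        (fun j => j - 1) (fun j => j) ?_ hC'
      · have heq : (fun p q : Fin (n+1) × Fin n.factorial =>
            if q.1 = p.1 - 1 then True else if q.1 = p.1 then False
              else ¬ C q.2 p.2) = (fun x y => ¬ B y x) := by
          funext x y
          rw [hBdef]
          dsimp only
          have key1 : (y.1 = x.1 - 1) ↔ (y.1 + 1 = x.1) := eq_sub_iff_add_eq
          by_cases h1 : x.1 = y.1
          · have hne : ¬ (y.1 = x.1 - 1) := by
              rw [key1, h1]
              intro hc
              apply h10
              have h0 : y.1 + 1 = y.1 + 0 := by rw [add_zero]; exact hc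
              exact add_left_cancel h0
            rw [if_neg hne, if_pos h1.symm, if_pos h1]
            simp
          · by_cases h2 : y.1 + 1 = x.1
            · rw [if_pos (key1.mpr h2), if_neg h1, if_pos h2.symm]
              simp
            · rw [if_neg (fun hc => h2 (key1.mp hc)),
                if_neg (fun hc : y.1 = x.1 => h1 hc.symm), if_neg h1,
                if_neg (fun hc : x.1 = y.1 + 1 => h2 hc.symm)]
        rw [heq] at hblk
        exact hblk
      · intro S h1 h2
        obtain ⟨i, hi1, hi2⟩ := exists_transition S h1 h2
        refine ⟨i + 1, ?_, hi2⟩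
        show i + 1 - 1 ∉ S
        rwa [add_sub_cancel_right]
    set e : Fin (n+1) × Fin n.factorial ≃ Fin ((n+1).factorial) :=
      finProdFinEquiv.trans (finCongr (Nat.factorial_succ n).symm) with hedef
    refine ⟨fun x y => B (e.symm x) (e.symm y), dom_equiv e hB, ?_⟩
    exact dom_equiv e hB'

/-- For each n ≥ 2 there is a binary relation on sets of size n! whose
dominating number and dual dominating number both equal n. -/
theorem exists_rel_delta_eq_dual_delta (n : ℕ) (hn : 2 ≤ n) :
    ∃ C : Fin n.factorial → Fin n.factorial → Prop,
      IsLeast {k | ∃ Y : Finset (Fin n.factorial),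
        (∀ x, ∃ y ∈ Y, C x y) ∧ Y.card = k} n ∧
      IsLeast {k | ∃ X : Finset (Fin n.factorial),
        (∀ y, ∃ x ∈ X, ¬ C x y) ∧ X.card = k} n := by
  obtain ⟨C, ⟨⟨Y, hY1, hY2⟩, hlow⟩, ⟨⟨X, hX1, hX2⟩, hlow'⟩⟩ := key n hn
  refine ⟨C, ⟨⟨Y, hY1, hY2⟩, ?_⟩, ⟨⟨X, hX1, hX2⟩, ?_⟩⟩
  · rintro k ⟨Y', h1, rfl⟩
    exact hlow Y' h1
  · rintro k ⟨X', h1, rfl⟩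
    exact hlow' X' h1
end
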